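/- arXiv:2110.14852 — 2 statements merged into one kernel-verified Lean document; each statement's English description precedes it below -/
import Mathlib

section
/- Conditional expectation identity in law: for f ∈ L^1(γ) and t ≥ 0, the pair (Q_t f under γ) and (E[f(B_1) | F^B_{e^{−2t}}] under P) have the same law, where Q is the Ornstein–Uhlenbeck semigroup (Q_t f)(x) = ∫ f(e^{−t}x + √(1−e^{−2t}) y) γ(dy). -/
open MeasureTheory ProbabilityTheory Set Filter
open scoped ENNReal NNReal Topology

noncomputable section

abbrev Ed (d : ℕ) : Type := EuclideanSpace ℝ (Fin d)

variable {Ω : Type*}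

/-- The natural filtration (σ-algebra at time `t`) generated by the process `B`. -/
def natFiltration {d : ℕ} [MeasurableSpace Ω] (B : ℝ → Ω → Ed d) (t : ℝ) :
    MeasurableSpace Ω :=
  ⨆ s ∈ Set.Icc (0:ℝ) t, MeasurableSpace.comap (B s) inferInstance

/-- `B` is a standard `d`-dimensional Brownian motion under `P`. -/
structure IsStandardBM {d : ℕ} [MeasurableSpace Ω] (P : Measure Ω) (B : ℝ → Ω → Ed d) :
    Prop where
  measurable : ∀ t, Measurable (B t)
  start : ∀ᵐ ω ∂P, B 0 ω = 0
  cont : ∀ᵐ ω ∂P, Continuous fun t => B t ω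
  indep_past : ∀ s t : ℝ, 0 ≤ s → s ≤ t →
    Indep (MeasurableSpace.comap (fun ω => B t ω - B s ω) inferInstance)
      (natFiltration B s) P
  gauss_coord : ∀ s t : ℝ, 0 ≤ s → s ≤ t → ∀ i : Fin d,
    Measure.map (fun ω => B t ω i - B s ω i) P = gaussianReal 0 (Real.toNNReal (t - s))
  coord_indep : ∀ s t : ℝ, 0 ≤ s → s ≤ t →
    iIndepFun (m := fun _ : Fin d => (inferInstance : MeasurableSpace ℝ))
      (fun i ω => B t ω i - B s ω i) P

/-- A process `v` is progressively measurable with respect to the natural filtration of `B`. -/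
def ProgMeasDrift {d : ℕ} [MeasurableSpace Ω] (B v : ℝ → Ω → Ed d) : Prop :=
  ∀ t : ℝ,
    StronglyMeasurable[(inferInstance : MeasurableSpace (Set.Iic t)).prod (natFiltration B t)]
      (fun p : Set.Iic t × Ω => v p.1 p.2)

/-- The energy `E[∫_0^∞ |v_t|^2 dt]` of a drift. -/
def energy {d : ℕ} [MeasurableSpace Ω] (P : Measure Ω) (v : ℝ → Ω → Ed d) : ℝ≥0∞ :=
  ∫⁻ ω, (∫⁻ t in Set.Ioi (0:ℝ), (‖v t ω‖₊ : ℝ≥0∞) ^ 2) ∂P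

/-- The standard Gaussian measure on `ℝ^d`. -/
def stdGaussian (d : ℕ) : Measure (Ed d) :=
  Measure.map (fun x : Fin d → ℝ => (WithLp.equiv 2 (Fin d → ℝ)).symm x)
    (Measure.pi fun _ : Fin d => gaussianReal 0 1)

/-- The Ornstein–Uhlenbeck semigroup `(Q_t f)(x) = ∫ f(e^{-t} x + √(1-e^{-2t}) y) γ(dy)`. -/
def OUsg {d : ℕ} (t : ℝ) (f : Ed d → ℝ) (x : Ed d) : ℝ :=
  ∫ y, f (Real.exp (-t) • x + Real.sqrt (1 - Real.exp (-2*t)) • y) ∂(stdGaussian d)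


namespace OUAux

variable {d : ℕ}

lemma measurable_ofPi : Measurable fun x : Fin d → ℝ => (WithLp.equiv 2 (Fin d → ℝ)).symm x :=
  (MeasurableEquiv.toLp 2 (Fin d → ℝ)).measurable

instance : IsProbabilityMeasure (stdGaussian d) :=
  Measure.isProbabilityMeasure_map measurable_ofPi.aemeasurable

lemma measurable_smulPi (c : ℝ) : Measurable fun x : Fin d → ℝ => c • x :=
  measurable_pi_lambda _ fun i => ((measurable_pi_apply i).const_smul c)

lemma measurable_smulEd (c : ℝ) : Measurable fun x : Ed d => c • x :=
  (continuous_const_smul c).measurable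

lemma pi_gauss_map_smul (c : ℝ) :
    Measure.map (fun x : Fin d → ℝ => c • x) (Measure.pi fun _ => gaussianReal 0 1) =
      Measure.pi fun _ : Fin d => gaussianReal 0 ⟨c ^ 2, sq_nonneg c⟩ := by
  haveI hI : ∀ i : Fin d, SigmaFinite (gaussianReal 0 ⟨c ^ 2, sq_nonneg c⟩) := fun _ => by
    have := instIsProbabilityMeasureGaussianReal 0 ⟨c ^ 2, sq_nonneg c⟩
    infer_instance
  refine (@Measure.pi_eq _ _ _ _ (fun _ : Fin d => gaussianReal 0 ⟨c ^ 2, sq_nonneg c⟩) hI _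
    fun s hs => ?_).symm
  rw [Measure.map_apply (measurable_smulPi c) (MeasurableSet.univ_pi hs)]
  have hpre : (fun x : Fin d → ℝ => c • x) ⁻¹' Set.pi Set.univ s
      = Set.pi Set.univ fun i => (fun r => c * r) ⁻¹' s i := by
    ext x; simp [Set.mem_univ_pi, smul_eq_mul]
  rw [hpre, Measure.pi_pi]
  refine Finset.prod_congr rfl fun i _ => ?_
  rw [← Measure.map_apply (measurable_const_mul c) (hs i), gaussianReal_map_const_mul c]
  norm_num
  rfl

lemma stdGaussian_map_smul (c : ℝ) :
    Measure.map (fun x : Ed d => c • x) (stdGaussian d) =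
      Measure.map (fun x : Fin d → ℝ => (WithLp.equiv 2 (Fin d → ℝ)).symm x)
        (Measure.pi fun _ : Fin d => gaussianReal 0 ⟨c ^ 2, sq_nonneg c⟩) := by
  rw [_root_.stdGaussian, Measure.map_map (measurable_smulEd c) measurable_ofPi]
  have : (fun x : Ed d => c • x) ∘ (fun x : Fin d → ℝ => (WithLp.equiv 2 (Fin d → ℝ)).symm x)
      = (fun x : Fin d → ℝ => (WithLp.equiv 2 (Fin d → ℝ)).symm x) ∘ (fun x : Fin d → ℝ => c • x) :=
    rfl
  rw [this, ← Measure.map_map measurable_ofPi (measurable_smulPi c), pi_gauss_map_smul]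

variable {Ω : Type*} [MeasurableSpace Ω] {P : Measure Ω} [IsProbabilityMeasure P]
  {B : ℝ → Ω → Ed d}

lemma measurable_coord (hB : IsStandardBM P B) (u : ℝ) (i : Fin d) :
    Measurable fun ω => B u ω i :=
  ((measurable_pi_apply i).comp (MeasurableEquiv.toLp 2 (Fin d → ℝ)).symm.measurable).comp
    (hB.measurable u)

lemma incr_pi_law (hB : IsStandardBM P B) {a b : ℝ} (ha : 0 ≤ a) (hab : a ≤ b) :
    Measure.map (fun ω => fun i => B b ω i - B a ω i) P =
      Measure.pi fun _ : Fin d => gaussianReal 0 (b - a).toNNReal := by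
  have hcoord : ∀ i : Fin d, Measurable fun ω => B b ω i - B a ω i := fun i =>
    (measurable_coord hB b i).sub (measurable_coord hB a i)
  have hmeas : Measurable fun ω => (fun i => B b ω i - B a ω i) :=
    measurable_pi_lambda _ hcoord
  refine (Measure.pi_eq (μ := fun _ : Fin d => gaussianReal 0 (b - a).toNNReal)
    fun s hs => ?_).symm
  rw [Measure.map_apply hmeas (MeasurableSet.univ_pi hs)]
  have hpre : (fun ω => fun i => B b ω i - B a ω i) ⁻¹' Set.pi Set.univ s
      = ⋂ i, (fun ω => B b ω i - B a ω i) ⁻¹' s i := by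
    ext ω; simp [Set.mem_univ_pi]
  rw [hpre, (hB.coord_indep a b ha hab).meas_iInter fun i => ⟨s i, hs i, rfl⟩]
  refine Finset.prod_congr rfl fun i _ => ?_
  rw [← Measure.map_apply (hcoord i) (hs i), hB.gauss_coord a b ha hab i]

lemma incr_law (hB : IsStandardBM P B) {a b : ℝ} (ha : 0 ≤ a) (hab : a ≤ b) :
    Measure.map (fun ω => B b ω - B a ω) P =
      Measure.map (fun x : Ed d => Real.sqrt (b - a) • x) (stdGaussian d) := by
  have hcoord : ∀ i : Fin d, Measurable fun ω => B b ω i - B a ω i := fun i =>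
    (measurable_coord hB b i).sub (measurable_coord hB a i)
  have hmeas : Measurable fun ω => (fun i => B b ω i - B a ω i) :=
    measurable_pi_lambda _ hcoord
  have h1 : (fun ω => B b ω - B a ω)
      = (fun x : Fin d → ℝ => (WithLp.equiv 2 (Fin d → ℝ)).symm x)
        ∘ (fun ω => fun i => B b ω i - B a ω i) := rfl
  rw [h1, ← Measure.map_map measurable_ofPi hmeas, incr_pi_law hB ha hab,
    stdGaussian_map_smul]
  have hnn : (b - a).toNNReal = (⟨Real.sqrt (b - a) ^ 2, sq_nonneg _⟩ : ℝ≥0) :=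
    NNReal.coe_injective (by
      simp [Real.sq_sqrt (sub_nonneg.2 hab), Real.coe_toNNReal _ (sub_nonneg.2 hab)]; rfl)
  rw [hnn]

lemma bm_law (hB : IsStandardBM P B) {u : ℝ} (hu : 0 ≤ u) :
    Measure.map (B u) P =
      Measure.map (fun x : Ed d => Real.sqrt u • x) (stdGaussian d) := by
  have hae : B u =ᵐ[P] fun ω => B u ω - B 0 ω :=
    hB.start.mono fun ω h => by simp [h]
  rw [Measure.map_congr hae, incr_law hB le_rfl hu, sub_zero]

lemma bm_one_law (hB : IsStandardBM P B) : Measure.map (B 1) P = stdGaussian d := by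
  rw [bm_law hB zero_le_one]
  simp only [Real.sqrt_one, one_smul]
  exact Measure.map_id

end OUAux

/-- **Conditional expectation identity in law** (Section 3): for `f ∈ L¹(γ)` and `t ≥ 0`,
`Q_t f` under `γ` has the same law as `E[f(B₁) | 𝓕^B_{e^{-2t}}]` under `P`. -/
theorem ou_eq_condexp_law {d : ℕ} [MeasurableSpace Ω] (P : Measure Ω)
    [IsProbabilityMeasure P] (B : ℝ → Ω → Ed d) (hB : IsStandardBM P B)
    (t : ℝ) (ht : 0 ≤ t) (f : Ed d → ℝ) (hf : Measurable f)
    (hf1 : Integrable f (stdGaussian d)) :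
    Measure.map (OUsg t f) (stdGaussian d) =
      Measure.map (P[(fun ω => f (B 1 ω))|natFiltration B (Real.exp (-(2*t)))]) P := by
  classical
  set s : ℝ := Real.exp (-(2 * t)) with hs_def
  have hs0 : 0 < s := Real.exp_pos _
  have hs1 : s ≤ 1 := Real.exp_le_one_iff.mpr (by nlinarith)
  set c : ℝ := Real.sqrt (1 - s) with hc_def
  have hm : natFiltration B s ≤ ‹MeasurableSpace Ω› := by
    rw [natFiltration]
    exact iSup₂_le fun u _ => (hB.measurable u).comap_le
  haveI : SigmaFinite (P.trim hm) := inferInstance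
  set X : Ω → Ed d := B s with hX_def
  set D : Ω → Ed d := fun ω => B 1 ω - B s ω with hD_def
  have hX : Measurable X := hB.measurable s
  have hD : Measurable D := (hB.measurable 1).sub hX
  have hXm : Measurable[natFiltration B s] X := by
    refine Measurable.of_comap_le ?_
    rw [natFiltration]
    exact le_iSup₂ (f := fun u (_ : u ∈ Set.Icc (0:ℝ) s) =>
      MeasurableSpace.comap (B u) inferInstance) s ⟨hs0.le, le_rfl⟩
  have law_X : Measure.map X P
      = Measure.map (fun x : Ed d => Real.sqrt s • x) (stdGaussian d) :=
    OUAux.bm_law hB hs0.le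
  have law_D : Measure.map D P = Measure.map (fun x : Ed d => c • x) (stdGaussian d) :=
    OUAux.incr_law hB hs0.le hs1
  have law_B1 : Measure.map (B 1) P = stdGaussian d := OUAux.bm_one_law hB
  have hfB1_sm : AEStronglyMeasurable f (Measure.map (B 1) P) := by
    rw [law_B1]; exact hf.aestronglyMeasurable
  have hfB1 : Integrable (fun ω => f (B 1 ω)) P :=
    (integrable_map_measure hfB1_sm (hB.measurable 1).aemeasurable).mp (by rwa [law_B1])
  set g : Ed d → ℝ := fun x => ∫ y, f (x + c • y) ∂(stdGaussian d) with hg_def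
  have hgsm : StronglyMeasurable g := by
    have hmeas : Measurable fun p : Ed d × Ed d => f (p.1 + c • p.2) :=
      hf.comp (measurable_fst.add (measurable_snd.const_smul c))
    exact hmeas.stronglyMeasurable.integral_prod_right'
  have hg : Measurable g := hgsm.measurable
  have hg_eq : ∀ x : Ed d, ∫ y, f (x + y) ∂(Measure.map D P) = g x := by
    intro x
    have hadd : Measurable fun y : Ed d => x + y := measurable_const.add measurable_id
    have hsm : AEStronglyMeasurable (fun y : Ed d => f (x + y))
        (Measure.map (fun z : Ed d => c • z) (stdGaussian d)) :=
      (hf.comp hadd).aestronglyMeasurable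
    rw [law_D, integral_map (OUAux.measurable_smulEd c).aemeasurable hsm]
  have hBD : ∀ ω, X ω + D ω = B 1 ω := fun ω => by
    simp only [hX_def, hD_def]; abel
  have hIndepBase := hB.indep_past s 1 hs0.le hs1
  rw [Indep_iff] at hIndepBase
  have hIndepX : IndepFun X D P := by
    rw [indepFun_iff_measure_inter_preimage_eq_mul]
    intro u v hu hv
    have h := hIndepBase (D ⁻¹' v) (X ⁻¹' u) ⟨v, hv, rfl⟩ (hXm hu)
    rw [Set.inter_comm, h, mul_comm]
  haveI : IsProbabilityMeasure (Measure.map X P) := Measure.isProbabilityMeasure_map hX.aemeasurable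
  haveI : IsProbabilityMeasure (Measure.map D P) := Measure.isProbabilityMeasure_map hD.aemeasurable
  have hmapX : Measure.map (fun ω => (X ω, D ω)) P
      = (Measure.map X P).prod (Measure.map D P) :=
    (indepFun_iff_map_prod_eq_prod_map_map hX.aemeasurable hD.aemeasurable).mp hIndepX
  have hH0 : Measurable fun p : Ed d × Ed d => f (p.1 + p.2) :=
    hf.comp (measurable_fst.add measurable_snd)
  have hH0int : Integrable (fun p : Ed d × Ed d => f (p.1 + p.2))
      ((Measure.map X P).prod (Measure.map D P)) := by
    rw [← hmapX, integrable_map_measure hH0.aestronglyMeasurable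
      (hX.aemeasurable.prodMk hD.aemeasurable)]
    have heq : ((fun p : Ed d × Ed d => f (p.1 + p.2)) ∘ fun ω => (X ω, D ω))
        = fun ω => f (B 1 ω) := funext fun ω => by simp only [Function.comp]; rw [hBD ω]
    rw [heq]; exact hfB1
  have hgint : Integrable g (Measure.map X P) := by
    have h := hH0int.integral_prod_left
    have heq : (fun x : Ed d => ∫ y, f (x + y) ∂(Measure.map D P)) = g := funext hg_eq
    rwa [heq] at h
  have hgX_int : Integrable (fun ω => g (X ω)) P :=
    (integrable_map_measure hgsm.aestronglyMeasurable hX.aemeasurable).mp hgint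
  have key : ∀ A : Set Ω, MeasurableSet[natFiltration B s] A →
      ∫ ω in A, g (X ω) ∂P = ∫ ω in A, f (B 1 ω) ∂P := by
    intro A hA
    have hA0 : MeasurableSet A := hm A hA
    set χ : Ω → ℝ := A.indicator (fun _ => (1:ℝ)) with hχ_def
    set W : Ω → Ed d × ℝ := fun ω => (X ω, χ ω) with hW_def
    have hχm : Measurable[natFiltration B s] χ := measurable_const.indicator hA
    have hWmm : Measurable[natFiltration B s] W := hXm.prodMk hχm
    have hWm : Measurable W := hX.prodMk (measurable_const.indicator hA0)
    have hIndepW : IndepFun W D P := by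
      rw [indepFun_iff_measure_inter_preimage_eq_mul]
      intro u v hu hv
      have h := hIndepBase (D ⁻¹' v) (W ⁻¹' u) ⟨v, hv, rfl⟩ (hWmm hu)
      rw [Set.inter_comm, h, mul_comm]
    haveI : IsProbabilityMeasure (Measure.map W P) := Measure.isProbabilityMeasure_map hWm.aemeasurable
    have hmapW : Measure.map (fun ω => (W ω, D ω)) P
        = (Measure.map W P).prod (Measure.map D P) :=
      (indepFun_iff_map_prod_eq_prod_map_map hWm.aemeasurable hD.aemeasurable).mp hIndepW
    set H : (Ed d × ℝ) × Ed d → ℝ := fun p => p.1.2 * f (p.1.1 + p.2) with hH_def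
    have hHm : Measurable H :=
      measurable_fst.snd.mul (hf.comp (measurable_fst.fst.add measurable_snd))
    have hcomp : (H ∘ fun ω => (W ω, D ω)) = fun ω => χ ω * f (B 1 ω) := by
      funext ω
      simp only [hH_def, hW_def, Function.comp]
      rw [hBD ω]
    have hint : Integrable (fun ω => χ ω * f (B 1 ω)) P := by
      have heq : (fun ω => χ ω * f (B 1 ω)) = A.indicator fun ω => f (B 1 ω) := by
        funext ω
        by_cases h : ω ∈ A <;> simp [hχ_def, h]
      rw [heq]
      exact hfB1.indicator hA0
    have hHint : Integrable H ((Measure.map W P).prod (Measure.map D P)) := by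
      rw [← hmapW, integrable_map_measure hHm.aestronglyMeasurable
        (hWm.aemeasurable.prodMk hD.aemeasurable), hcomp]
      exact hint
    have e1 : ∫ ω in A, f (B 1 ω) ∂P = ∫ ω, χ ω * f (B 1 ω) ∂P := by
      rw [← integral_indicator hA0]
      congr 1
      funext ω
      by_cases h : ω ∈ A <;> simp [hχ_def, h]
    have e2 : ∫ ω, χ ω * f (B 1 ω) ∂P
        = ∫ p, H p ∂((Measure.map W P).prod (Measure.map D P)) := by
      rw [← hmapW, integral_map (hWm.aemeasurable.prodMk hD.aemeasurable)
        hHm.aestronglyMeasurable]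
      exact integral_congr_ae (Eventually.of_forall fun ω => (congrFun hcomp ω).symm)
    have e3 : ∫ p, H p ∂((Measure.map W P).prod (Measure.map D P))
        = ∫ q, q.2 * g q.1 ∂(Measure.map W P) := by
      rw [integral_prod _ hHint]
      refine integral_congr_ae (Eventually.of_forall fun q => ?_)
      simp only [hH_def]
      rw [integral_const_mul, hg_eq q.1]
    have e4 : ∫ q, q.2 * g q.1 ∂(Measure.map W P) = ∫ ω, χ ω * g (X ω) ∂P := by
      have hsm : AEStronglyMeasurable (fun q : Ed d × ℝ => q.2 * g q.1)
          (Measure.map W P) :=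
        (measurable_snd.mul (hg.comp measurable_fst)).aestronglyMeasurable
      rw [integral_map hWm.aemeasurable hsm]
    have e5 : ∫ ω, χ ω * g (X ω) ∂P = ∫ ω in A, g (X ω) ∂P := by
      rw [← integral_indicator hA0]
      congr 1
      funext ω
      by_cases h : ω ∈ A <;> simp [hχ_def, h]
    rw [e1, e2, e3, e4, e5]
  have hcond : (fun ω => g (X ω)) =ᵐ[P] P[(fun ω => f (B 1 ω))|natFiltration B s] :=
    ae_eq_condExp_of_forall_setIntegral_eq hm hfB1
      (fun A _ _ => hgX_int.integrableOn) (fun A hA _ => key A hA)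
      ((hgsm.comp_measurable hXm).aestronglyMeasurable)
  rw [← Measure.map_congr hcond]
  have hmm : Measure.map (fun ω => g (X ω)) P = Measure.map g (Measure.map X P) :=
    (Measure.map_map hg hX).symm
  rw [hmm, law_X, Measure.map_map hg (OUAux.measurable_smulEd _)]
  congr 1
  funext x
  have h1 : Real.exp (-t) = Real.sqrt s := by
    rw [hs_def, show -(2 * t) = -t + -t by ring, Real.exp_add,
      Real.sqrt_mul_self (Real.exp_nonneg _)]
  have h2 : Real.sqrt (1 - Real.exp (-2 * t)) = c := by
    rw [hc_def, hs_def]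
    norm_num [neg_mul]
  simp only [OUsg, Function.comp, hg_def, h1, h2]
end
end

section
/- If G_n → G in L^2(ν) for a finite measure ν with dν = (1+F_-)d𝕎 for a probability measure 𝕎, and the G_n are probability densities with respect to 𝕎, then G_n log G_n → G log G in L^1(𝕎); i.e., the entropies ∫ G_n log G_n d𝕎 converge to ∫ G log G d𝕎. -/
open MeasureTheory Filter
open scoped ENNReal NNReal Topology

noncomputable section


lemma log_le_two_sqrt {t : ℝ} (ht : 0 < t) : Real.log t ≤ 2 * Real.sqrt t := by
  have h1 : Real.log (Real.sqrt t) ≤ Real.sqrt t - 1 :=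
    Real.log_le_sub_one_of_pos (Real.sqrt_pos.mpr ht)
  have h2 : Real.log t = 2 * Real.log (Real.sqrt t) := by
    rw [Real.log_sqrt ht.le]; ring
  nlinarith [Real.sqrt_nonneg t]

lemma neg_log_le {t : ℝ} (ht : 0 < t) : -Real.log t ≤ 2 / Real.sqrt t := by
  have h1 : Real.log t⁻¹ ≤ 2 * Real.sqrt t⁻¹ := log_le_two_sqrt (by positivity)
  rw [Real.log_inv, Real.sqrt_inv] at h1
  calc -Real.log t ≤ 2 * (Real.sqrt t)⁻¹ := h1
    _ = 2 / Real.sqrt t := by ring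

lemma mul_log_ge {t : ℝ} (ht : 0 ≤ t) : -(2 * Real.sqrt t) ≤ t * Real.log t := by
  rcases eq_or_lt_of_le ht with h | h
  · simp [← h]
  · have h1 := neg_log_le h
    have hs : 0 < Real.sqrt t := Real.sqrt_pos.mpr h
    have h2 : t / Real.sqrt t = Real.sqrt t := Real.div_sqrt
    have h1' : -(2 / Real.sqrt t) ≤ Real.log t := by linarith
    have h3 := mul_le_mul_of_nonneg_left h1' h.le
    have he : t * -(2 / Real.sqrt t) = -(2 * (t / Real.sqrt t)) := by ring
    rw [he, h2] at h3; linarith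

lemma logsq_le {t : ℝ} (ht : 0 ≤ t) : (Real.log (1 + t)) ^ 2 ≤ 4 * t := by
  have hs := Real.sqrt_nonneg t
  have hsq := Real.sq_sqrt ht
  have h1 : (1 : ℝ) + t ≤ (1 + Real.sqrt t) ^ 2 := by nlinarith
  have h2 : Real.log (1 + t) ≤ Real.log ((1 + Real.sqrt t) ^ 2) :=
    Real.log_le_log (by linarith) h1
  have h3 : Real.log ((1 + Real.sqrt t) ^ 2) = 2 * Real.log (1 + Real.sqrt t) := by
    rw [Real.log_pow]; push_cast; ring
  have h4 : Real.log (1 + Real.sqrt t) ≤ Real.sqrt t := by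
    nlinarith [Real.log_le_sub_one_of_pos (show (0:ℝ) < 1 + Real.sqrt t by linarith)]
  have h5 : 0 ≤ Real.log (1 + t) := Real.log_nonneg (by linarith)
  nlinarith

lemma phi_upper {a b : ℝ} (hb : 0 ≤ b) (hab : b ≤ a) :
    a * Real.log a - b * Real.log b ≤ (a - b) * (1 + Real.log (1 + a)) := by
  have ha : 0 ≤ a := hb.trans hab
  rcases eq_or_lt_of_le ha with h | hA
  · have : b = 0 := le_antisymm (h ▸ hab) hb
    simp [← h, this]
  · have hla : Real.log a ≤ Real.log (1 + a) := Real.log_le_log hA (by linarith)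
    have hl1a : 0 ≤ Real.log (1 + a) := Real.log_nonneg (by linarith)
    rcases eq_or_lt_of_le hb with hB | hB
    · rw [← hB]; simp only [zero_mul, Real.log_zero, sub_zero]
      nlinarith
    · have hdiv : Real.log a - Real.log b ≤ a / b - 1 := by
        have := Real.log_le_sub_one_of_pos (show (0:ℝ) < a / b by positivity)
        rwa [Real.log_div hA.ne' hB.ne'] at this
      have h2 : b * (Real.log a - Real.log b) ≤ a - b := by
        have := mul_le_mul_of_nonneg_left hdiv hB.le
        have hb' : b * (a / b - 1) = a - b := by field_simp
        linarith
      nlinarith [mul_le_mul_of_nonneg_left hla (show (0:ℝ) ≤ a - b by linarith)]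

lemma phi_lower {a b : ℝ} (hb : 0 ≤ b) (hab : b ≤ a) :
    -(3 * Real.sqrt (a - b)) ≤ a * Real.log a - b * Real.log b := by
  have ha : 0 ≤ a := hb.trans hab
  have hsab := Real.sqrt_nonneg (a - b)
  rcases le_or_gt 1 b with h1b | h1b
  · -- b ≥ 1 : φ increasing
    have hlb : 0 ≤ Real.log b := Real.log_nonneg h1b
    have hmono : Real.log b ≤ Real.log a := Real.log_le_log (by linarith) hab
    nlinarith
  rcases le_or_gt 1 a with h1a | h1a
  · -- b < 1 ≤ a
    have h1 : 0 ≤ a * Real.log a := mul_nonneg ha (Real.log_nonneg h1a)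
    have h2 : b * Real.log b ≤ 0 := mul_nonpos_of_nonneg_of_nonpos hb
      (Real.log_nonpos hb (by linarith))
    nlinarith
  -- a < 1
  rcases le_or_gt a (2 * b) with hc | hc
  · rcases eq_or_lt_of_le ha with h | hA
    · have : b = 0 := le_antisymm (h ▸ hab) hb
      simp [← h, this]
    · have hB : 0 < b := by linarith
      have hmono : Real.log b ≤ Real.log a := Real.log_le_log hB hab
      -- diff ≥ (a-b) log b ≥ -2 (a-b)/√b ≥ -2√(a-b)
      have hstep : -(2 * ((a - b) / Real.sqrt b)) ≤ (a - b) * Real.log b := by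
        have h0 := neg_log_le hB
        have h0' : -(2 / Real.sqrt b) ≤ Real.log b := by linarith
        have hab' : 0 ≤ a - b := by linarith
        have := mul_le_mul_of_nonneg_left h0' hab'
        have he : (a - b) * -(2 / Real.sqrt b) = -(2 * ((a - b) / Real.sqrt b)) := by ring
        rw [he] at this; linarith
      have hbs : Real.sqrt (a - b) ≤ Real.sqrt b := Real.sqrt_le_sqrt (by linarith)
      have hsb : 0 < Real.sqrt b := Real.sqrt_pos.mpr hB
      have hfrac : (a - b) / Real.sqrt b ≤ Real.sqrt (a - b) := by
        rw [div_le_iff₀ hsb]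
        calc a - b = Real.sqrt (a-b) * Real.sqrt (a-b) := (Real.mul_self_sqrt (by linarith)).symm
          _ ≤ Real.sqrt (a-b) * Real.sqrt b := by nlinarith
      have hd : (a - b) * Real.log b ≤ a * Real.log a - b * Real.log b := by
        nlinarith [mul_le_mul_of_nonneg_left hmono ha]
      nlinarith
  · -- 2b < a  (so a > 0)
    have hA : 0 < a := by linarith
    have h2 : b * Real.log b ≤ 0 := mul_nonpos_of_nonneg_of_nonpos hb
      (Real.log_nonpos hb (by linarith))
    have h3 : -(2 * Real.sqrt a) ≤ a * Real.log a := mul_log_ge ha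
    have h4 : Real.sqrt a ≤ Real.sqrt 2 * Real.sqrt (a - b) := by
      rw [← Real.sqrt_mul (by norm_num)]
      exact Real.sqrt_le_sqrt (by linarith)
    have h5 : Real.sqrt 2 ≤ 3 / 2 := by
      nlinarith [Real.sq_sqrt (show (0:ℝ) ≤ 2 by norm_num), Real.sqrt_nonneg 2]
    nlinarith

lemma phi_key {a b : ℝ} (ha : 0 ≤ a) (hb : 0 ≤ b) :
    |a * Real.log a - b * Real.log b| ≤
      3 * Real.sqrt |a - b| + |a - b| * (1 + Real.log (1 + a) + Real.log (1 + b)) := by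
  have hla : 0 ≤ Real.log (1 + a) := Real.log_nonneg (by linarith)
  have hlb : 0 ≤ Real.log (1 + b) := Real.log_nonneg (by linarith)
  rcases le_total b a with h | h
  · rw [abs_of_nonneg (show (0:ℝ) ≤ a - b by linarith)]
    rw [abs_le]
    constructor
    · nlinarith [phi_lower hb h, Real.sqrt_nonneg (a - b),
        mul_nonneg (show (0:ℝ) ≤ a - b by linarith) hlb]
    · nlinarith [phi_upper hb h, Real.sqrt_nonneg (a - b),
        mul_nonneg (show (0:ℝ) ≤ a - b by linarith) hlb]
  · rw [show a - b = -(b - a) by ring, abs_neg,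
      abs_of_nonneg (show (0:ℝ) ≤ b - a by linarith), abs_sub_comm]
    rw [abs_le]
    constructor
    · nlinarith [phi_lower ha h, Real.sqrt_nonneg (b - a),
        mul_nonneg (show (0:ℝ) ≤ b - a by linarith) hla]
    · nlinarith [phi_upper ha h, Real.sqrt_nonneg (b - a),
        mul_nonneg (show (0:ℝ) ≤ b - a by linarith) hla]


section Helpers
variable {α : Type*} [MeasurableSpace α]

lemma lintegral_cs (μ : Measure α) {f g : α → ℝ≥0∞}
    (hf : AEMeasurable f μ) (hg : AEMeasurable g μ) :
    ∫⁻ x, f x * g x ∂μ ≤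
      (∫⁻ x, f x ^ (2:ℝ) ∂μ) ^ (1/2:ℝ) * (∫⁻ x, g x ^ (2:ℝ) ∂μ) ^ (1/2:ℝ) := by
  have hpq : Real.HolderConjugate 2 2 := Real.HolderConjugate.two_two
  have := ENNReal.lintegral_mul_le_Lp_mul_Lq μ hpq hf hg
  simpa using this

lemma lintegral_le_sqrt_sq (μ : Measure α) [IsProbabilityMeasure μ] {f : α → ℝ≥0∞}
    (hf : AEMeasurable f μ) :
    ∫⁻ x, f x ∂μ ≤ (∫⁻ x, f x ^ (2:ℝ) ∂μ) ^ (1/2:ℝ) := by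
  have := lintegral_cs μ hf (aemeasurable_const (b := (1:ℝ≥0∞)))
  simpa [ENNReal.one_rpow, lintegral_one, measure_univ] using this

end Helpers

/-- **Convergence of entropies** (equation (2.9), via Vitali's convergence theorem): if
`G_n → G` in `L²(ν)` where `dν = (1 + F₋) d𝕎` for a probability measure `𝕎` and a
nonnegative integrable `F₋`, and the `G_n`, `G` are probability densities w.r.t. `𝕎`,
then `G_n log G_n → G log G` in `L¹(𝕎)`; in particular the entropies
`∫ G_n log G_n d𝕎` converge to `∫ G log G d𝕎`. -/
theorem entropy_convergence {α : Type*} [MeasurableSpace α] (𝕎 : Measure α)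
    [IsProbabilityMeasure 𝕎] (Fm : α → ℝ) (hFmm : Measurable Fm) (hFm0 : ∀ x, 0 ≤ Fm x)
    (hFmInt : Integrable Fm 𝕎)
    (G : ℕ → α → ℝ) (G₀ : α → ℝ) (hGm : ∀ n, Measurable (G n)) (hG₀m : Measurable G₀)
    (hGpos : ∀ n x, 0 ≤ G n x) (hG₀pos : ∀ x, 0 ≤ G₀ x)
    (hGdens : ∀ n, ∫ x, G n x ∂𝕎 = 1) (hG₀dens : ∫ x, G₀ x ∂𝕎 = 1)
    (hL2 : Tendsto
      (fun n => ∫⁻ x, ENNReal.ofReal ((G n x - G₀ x) ^ 2)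
        ∂(𝕎.withDensity fun x => ENNReal.ofReal (1 + Fm x)))
      atTop (nhds 0)) :
    Tendsto (fun n => ∫ x, |G n x * Real.log (G n x) - G₀ x * Real.log (G₀ x)| ∂𝕎)
        atTop (nhds 0) ∧
      Tendsto (fun n => ∫ x, G n x * Real.log (G n x) ∂𝕎) atTop
        (nhds (∫ x, G₀ x * Real.log (G₀ x) ∂𝕎)) := by
  classical
  -- measurability of entropy integrands
  have hphi : ∀ n, Measurable fun x => G n x * Real.log (G n x) := fun n =>
    (hGm n).mul (Real.measurable_log.comp (hGm n))
  have hphi0 : Measurable fun x => G₀ x * Real.log (G₀ x) :=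
    hG₀m.mul (Real.measurable_log.comp hG₀m)
  -- the L² distances with respect to 𝕎
  set L : ℕ → ℝ≥0∞ := fun n => ∫⁻ x, ENNReal.ofReal ((G n x - G₀ x) ^ 2) ∂𝕎 with hLdef
  have hL : Tendsto L atTop (𝓝 0) := by
    refine tendsto_of_tendsto_of_tendsto_of_le_of_le tendsto_const_nhds hL2
      (fun n => zero_le) ?_
    intro n
    show L n ≤ ∫⁻ x, ENNReal.ofReal ((G n x - G₀ x) ^ 2)
      ∂(𝕎.withDensity fun x => ENNReal.ofReal (1 + Fm x))
    rw [lintegral_withDensity_eq_lintegral_mul _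
      (show Measurable fun x => ENNReal.ofReal (1 + Fm x) from
        (measurable_const.add hFmm).ennreal_ofReal)
      (show Measurable fun x => ENNReal.ofReal ((G n x - G₀ x) ^ 2) from
        (((hGm n).sub hG₀m).pow_const 2).ennreal_ofReal)]
    refine lintegral_mono fun x => ?_
    have h1 : (1:ℝ≥0∞) ≤ ENNReal.ofReal (1 + Fm x) :=
      ENNReal.one_le_ofReal.mpr (by linarith [hFm0 x])
    calc ENNReal.ofReal ((G n x - G₀ x) ^ 2)
        = 1 * ENNReal.ofReal ((G n x - G₀ x) ^ 2) := (one_mul _).symm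
      _ ≤ ENNReal.ofReal (1 + Fm x) * ENNReal.ofReal ((G n x - G₀ x) ^ 2) := by
          exact mul_le_mul_left h1 _
  -- integrability and lintegral of the densities
  have hGint : ∀ n, Integrable (G n) 𝕎 := by
    intro n; by_contra h
    have := hGdens n
    rw [integral_undef h] at this
    exact one_ne_zero this.symm
  have hGlint : ∀ n, ∫⁻ x, ENNReal.ofReal (G n x) ∂𝕎 = 1 := by
    intro n
    rw [← ofReal_integral_eq_lintegral_ofReal (hGint n) (ae_of_all _ (hGpos n)), hGdens n,
      ENNReal.ofReal_one]
  have hG₀int : Integrable G₀ 𝕎 := by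
    by_contra h
    have := hG₀dens
    rw [integral_undef h] at this
    exact one_ne_zero this.symm
  have hG₀lint : ∫⁻ x, ENNReal.ofReal (G₀ x) ∂𝕎 = 1 := by
    rw [← ofReal_integral_eq_lintegral_ofReal hG₀int (ae_of_all _ hG₀pos), hG₀dens,
      ENNReal.ofReal_one]
  -- the L¹ distances between entropies
  set J : ℕ → ℝ≥0∞ := fun n =>
    ∫⁻ x, ENNReal.ofReal |G n x * Real.log (G n x) - G₀ x * Real.log (G₀ x)| ∂𝕎 with hJdef
  -- log-square bound : ∫⁻ ofReal ((log (1+g))²) ≤ 4 for a density g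
  have hlogsq : ∀ (g : α → ℝ) (_ : Measurable g) (_ : ∀ x, 0 ≤ g x)
      (_ : ∫⁻ x, ENNReal.ofReal (g x) ∂𝕎 = 1),
      ∫⁻ x, ENNReal.ofReal (Real.log (1 + g x)) ^ (2:ℝ) ∂𝕎 ≤ 4 := by
    intro g hgm hg0 hgl
    have hpt : ∀ x, ENNReal.ofReal (Real.log (1 + g x)) ^ (2:ℝ)
        ≤ 4 * ENNReal.ofReal (g x) := by
      intro x
      have hln : 0 ≤ Real.log (1 + g x) := Real.log_nonneg (by linarith [hg0 x])
      rw [ENNReal.ofReal_rpow_of_nonneg hln (by norm_num)]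
      rw [show (4:ℝ≥0∞) = ENNReal.ofReal (4:ℝ) by norm_num, ← ENNReal.ofReal_mul (by norm_num)]
      apply ENNReal.ofReal_le_ofReal
      rw [Real.rpow_two]
      exact logsq_le (hg0 x)
    calc ∫⁻ x, ENNReal.ofReal (Real.log (1 + g x)) ^ (2:ℝ) ∂𝕎
        ≤ ∫⁻ x, 4 * ENNReal.ofReal (g x) ∂𝕎 := lintegral_mono hpt
      _ = 4 * ∫⁻ x, ENNReal.ofReal (g x) ∂𝕎 := lintegral_const_mul _ hgm.ennreal_ofReal
      _ = 4 := by rw [hgl, mul_one]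
  -- main estimate
  have key : ∀ n, J n ≤ 3 * L n ^ (1/4:ℝ) + 5 * L n ^ (1/2:ℝ) := by
    intro n
    set D : α → ℝ := fun x => |G n x - G₀ x| with hDdef
    have hDm : Measurable D := ((hGm n).sub hG₀m).abs
    -- the second moment of D
    have hD2 : ∫⁻ x, ENNReal.ofReal (D x) ^ (2:ℝ) ∂𝕎 = L n := by
      refine lintegral_congr fun x => ?_
      rw [ENNReal.ofReal_rpow_of_nonneg (abs_nonneg _) (by norm_num), Real.rpow_two,
        sq_abs]
    have hDle : ∫⁻ x, ENNReal.ofReal (D x) ∂𝕎 ≤ L n ^ (1/2:ℝ) := by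
      have := lintegral_le_sqrt_sq 𝕎 hDm.ennreal_ofReal.aemeasurable
      rwa [hD2] at this
    -- term 1 : sqrt
    have hT1 : ∫⁻ x, ENNReal.ofReal (Real.sqrt (D x)) ∂𝕎 ≤ L n ^ (1/4:ℝ) := by
      have h1 := lintegral_le_sqrt_sq 𝕎
        (hDm.sqrt.ennreal_ofReal.aemeasurable)
      have h2 : ∫⁻ x, ENNReal.ofReal (Real.sqrt (D x)) ^ (2:ℝ) ∂𝕎
          = ∫⁻ x, ENNReal.ofReal (D x) ∂𝕎 := by
        refine lintegral_congr fun x => ?_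
        rw [ENNReal.ofReal_rpow_of_nonneg (Real.sqrt_nonneg _) (by norm_num),
          Real.rpow_two, Real.sq_sqrt (abs_nonneg _)]
      rw [h2] at h1
      calc ∫⁻ x, ENNReal.ofReal (Real.sqrt (D x)) ∂𝕎
          ≤ (∫⁻ x, ENNReal.ofReal (D x) ∂𝕎) ^ (1/2:ℝ) := h1
        _ ≤ (L n ^ (1/2:ℝ)) ^ (1/2:ℝ) := ENNReal.rpow_le_rpow hDle (by norm_num)
        _ = L n ^ (1/4:ℝ) := by rw [← ENNReal.rpow_mul]; norm_num
    -- terms 3/4 : D * log(1+g)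
    have hT3 : ∀ (g : α → ℝ) (hgm : Measurable g) (hg0 : ∀ x, 0 ≤ g x)
        (hgl : ∫⁻ x, ENNReal.ofReal (g x) ∂𝕎 = 1),
        ∫⁻ x, ENNReal.ofReal (D x * Real.log (1 + g x)) ∂𝕎 ≤ 2 * L n ^ (1/2:ℝ) := by
      intro g hgm hg0 hgl
      have hsplit : ∀ x, ENNReal.ofReal (D x * Real.log (1 + g x))
          = ENNReal.ofReal (D x) * ENNReal.ofReal (Real.log (1 + g x)) :=
        fun x => ENNReal.ofReal_mul (abs_nonneg _)
      calc ∫⁻ x, ENNReal.ofReal (D x * Real.log (1 + g x)) ∂𝕎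
          = ∫⁻ x, ENNReal.ofReal (D x) * ENNReal.ofReal (Real.log (1 + g x)) ∂𝕎 :=
            lintegral_congr hsplit
        _ ≤ (∫⁻ x, ENNReal.ofReal (D x) ^ (2:ℝ) ∂𝕎) ^ (1/2:ℝ) *
            (∫⁻ x, ENNReal.ofReal (Real.log (1 + g x)) ^ (2:ℝ) ∂𝕎) ^ (1/2:ℝ) :=
            lintegral_cs 𝕎 hDm.ennreal_ofReal.aemeasurable
              ((Real.measurable_log.comp (measurable_const.add hgm)).ennreal_ofReal).aemeasurable
        _ ≤ L n ^ (1/2:ℝ) * (4:ℝ≥0∞) ^ (1/2:ℝ) := by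
            rw [hD2]
            exact mul_le_mul_right (ENNReal.rpow_le_rpow (hlogsq g hgm hg0 hgl) (by norm_num)) _
        _ = 2 * L n ^ (1/2:ℝ) := by
            rw [show (4:ℝ≥0∞) = (2:ℝ≥0∞) ^ (2:ℕ) by norm_num, ← ENNReal.rpow_natCast,
              ← ENNReal.rpow_mul]
            norm_num
            rw [mul_comm]
    -- pointwise bound and additivity
    have hpoint : ∀ x, ENNReal.ofReal |G n x * Real.log (G n x) - G₀ x * Real.log (G₀ x)|
        ≤ ENNReal.ofReal (3 * Real.sqrt (D x)) + ENNReal.ofReal (D x)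
          + ENNReal.ofReal (D x * Real.log (1 + G n x))
          + ENNReal.ofReal (D x * Real.log (1 + G₀ x)) := by
      intro x
      have hk := phi_key (hGpos n x) (hG₀pos x)
      have hln : 0 ≤ Real.log (1 + G n x) := Real.log_nonneg (by linarith [hGpos n x])
      have hl0 : 0 ≤ Real.log (1 + G₀ x) := Real.log_nonneg (by linarith [hG₀pos x])
      have he : 3 * Real.sqrt (D x) + D x * (1 + Real.log (1 + G n x) + Real.log (1 + G₀ x))
          = 3 * Real.sqrt (D x) + D x + D x * Real.log (1 + G n x)
            + D x * Real.log (1 + G₀ x) := by ring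
      calc ENNReal.ofReal |G n x * Real.log (G n x) - G₀ x * Real.log (G₀ x)|
          ≤ ENNReal.ofReal (3 * Real.sqrt (D x)
              + D x * (1 + Real.log (1 + G n x) + Real.log (1 + G₀ x))) :=
            ENNReal.ofReal_le_ofReal hk
        _ = _ := by
            rw [he, ENNReal.ofReal_add (by positivity) (by positivity),
              ENNReal.ofReal_add (by positivity) (by positivity),
              ENNReal.ofReal_add (by positivity) (by positivity)]
    calc J n ≤ ∫⁻ x, (ENNReal.ofReal (3 * Real.sqrt (D x)) + ENNReal.ofReal (D x)
          + ENNReal.ofReal (D x * Real.log (1 + G n x))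
          + ENNReal.ofReal (D x * Real.log (1 + G₀ x))) ∂𝕎 := lintegral_mono hpoint
      _ = ∫⁻ x, ENNReal.ofReal (3 * Real.sqrt (D x)) ∂𝕎 + ∫⁻ x, ENNReal.ofReal (D x) ∂𝕎
          + ∫⁻ x, ENNReal.ofReal (D x * Real.log (1 + G n x)) ∂𝕎
          + ∫⁻ x, ENNReal.ofReal (D x * Real.log (1 + G₀ x)) ∂𝕎 := by
          rw [lintegral_add_right _
              (show Measurable fun x => ENNReal.ofReal (D x * Real.log (1 + G₀ x)) from
                (hDm.mul (measurable_const.add hG₀m).log).ennreal_ofReal),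
            lintegral_add_right _
              (show Measurable fun x => ENNReal.ofReal (D x * Real.log (1 + G n x)) from
                (hDm.mul (measurable_const.add (hGm n)).log).ennreal_ofReal),
            lintegral_add_right _ hDm.ennreal_ofReal]
      _ ≤ 3 * L n ^ (1/4:ℝ) + L n ^ (1/2:ℝ) + 2 * L n ^ (1/2:ℝ) + 2 * L n ^ (1/2:ℝ) := by
          have h1 : ∫⁻ x, ENNReal.ofReal (3 * Real.sqrt (D x)) ∂𝕎 ≤ 3 * L n ^ (1/4:ℝ) := by
            have : ∀ x, ENNReal.ofReal (3 * Real.sqrt (D x))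
                = 3 * ENNReal.ofReal (Real.sqrt (D x)) := by
              intro x
              rw [ENNReal.ofReal_mul (by norm_num)]
              norm_num
            rw [lintegral_congr this, lintegral_const_mul _ hDm.sqrt.ennreal_ofReal]
            exact mul_le_mul_right hT1 _
          exact add_le_add (add_le_add (add_le_add h1 hDle)
            (hT3 (G n) (hGm n) (hGpos n) (hGlint n))) (hT3 G₀ hG₀m hG₀pos hG₀lint)
      _ = 3 * L n ^ (1/4:ℝ) + 5 * L n ^ (1/2:ℝ) := by ring
  -- the bound tends to zero, hence J → 0
  have hbnd : Tendsto (fun n => 3 * L n ^ (1/4:ℝ) + 5 * L n ^ (1/2:ℝ)) atTop (𝓝 0) := by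
    have h4 : Tendsto (fun n => L n ^ (1/4:ℝ)) atTop (𝓝 0) := by
      have := hL.ennrpow_const (1/4:ℝ)
      simpa [ENNReal.zero_rpow_of_pos (by norm_num : (0:ℝ) < 1/4)] using this
    have h2 : Tendsto (fun n => L n ^ (1/2:ℝ)) atTop (𝓝 0) := by
      have := hL.ennrpow_const (1/2:ℝ)
      simpa [ENNReal.zero_rpow_of_pos (by norm_num : (0:ℝ) < 1/2)] using this
    have h4' := ENNReal.Tendsto.const_mul h4 (Or.inr (by norm_num : (3:ℝ≥0∞) ≠ ⊤))
    have h2' := ENNReal.Tendsto.const_mul h2 (Or.inr (by norm_num : (5:ℝ≥0∞) ≠ ⊤))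
    simpa using h4'.add h2'
  have hJ0 : Tendsto J atTop (𝓝 0) :=
    tendsto_of_tendsto_of_tendsto_of_le_of_le tendsto_const_nhds hbnd (fun n => zero_le) key
  have hInteq : ∀ n, ∫ x, |G n x * Real.log (G n x) - G₀ x * Real.log (G₀ x)| ∂𝕎
      = (J n).toReal := by
    intro n
    rw [integral_eq_lintegral_of_nonneg_ae (ae_of_all _ fun x => abs_nonneg _)
      (show AEStronglyMeasurable
        (fun x => |G n x * Real.log (G n x) - G₀ x * Real.log (G₀ x)|) 𝕎 from
        (((hphi n).sub hphi0).abs).aestronglyMeasurable)]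
  have htoReal : Tendsto (fun n => (J n).toReal) atTop (𝓝 0) := by
    have h := (ENNReal.tendsto_toReal (by simp : (0:ℝ≥0∞) ≠ ⊤)).comp hJ0
    exact h
  have part1 : Tendsto
      (fun n => ∫ x, |G n x * Real.log (G n x) - G₀ x * Real.log (G₀ x)| ∂𝕎) atTop (𝓝 0) :=
    htoReal.congr fun n => (hInteq n).symm
  refine ⟨part1, ?_⟩
  have hev : ∀ᶠ n in atTop, J n < ⊤ := hJ0.eventually_lt_const (by simp)
  have hdiffInt : ∀ n, J n < ⊤ →
      Integrable (fun x => G n x * Real.log (G n x) - G₀ x * Real.log (G₀ x)) 𝕎 := by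
    intro n hn
    refine ⟨((hphi n).sub hphi0).aestronglyMeasurable, ?_⟩
    rw [hasFiniteIntegral_iff_norm]
    simpa [Real.norm_eq_abs] using hn
  by_cases hint0 : Integrable (fun x => G₀ x * Real.log (G₀ x)) 𝕎
  · rw [tendsto_iff_dist_tendsto_zero]
    refine squeeze_zero' (Eventually.of_forall fun n => dist_nonneg) ?_ htoReal
    filter_upwards [hev] with n hn
    have hdi := hdiffInt n hn
    have hGn : Integrable (fun x => G n x * Real.log (G n x)) 𝕎 := by
      exact (hdi.add hint0).congr (ae_of_all _ fun x => by simp)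
    rw [Real.dist_eq, ← integral_sub hGn hint0]
    calc |∫ x, (G n x * Real.log (G n x) - G₀ x * Real.log (G₀ x)) ∂𝕎|
        ≤ ∫ x, |G n x * Real.log (G n x) - G₀ x * Real.log (G₀ x)| ∂𝕎 := by
          simpa [Real.norm_eq_abs] using
            norm_integral_le_integral_norm
              (fun x => G n x * Real.log (G n x) - G₀ x * Real.log (G₀ x)) (μ := 𝕎)
      _ = (J n).toReal := hInteq n
  · rw [integral_undef hint0]
    refine Tendsto.congr' ?_ tendsto_const_nhds
    filter_upwards [hev] with n hn
    have hni : ¬ Integrable (fun x => G n x * Real.log (G n x)) 𝕎 := by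
      intro h
      exact hint0 ((h.sub (hdiffInt n hn)).congr (ae_of_all _ fun x => by simp))
    exact (integral_undef hni).symm
end
end
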